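/- Let n ≥ 1, N = 2n, and let c ∈ ℂ be nonzero. With P the permutation operator on ℂ^N ⊗ ℂ^N, ε_i = 1 for i ≤ n and ε_i = −1 for i > n, Q the symplectic-type operator Q_{(a,b),(c,d)} = ε_a ε_c δ_{b,2n+1−a} δ_{d,2n+1−c}, and κ = n+1, define R(u,v) = I + c·P/(u−v) − c·Q/(u−v+cκ). Then for all u, v ∈ ℂ with u−v ≠ 0, u−v+cκ ≠ 0 and v−u+cκ ≠ 0, the unitarity condition holds: R(u,v)·R(v,u) = (1 − c²/(u−v)²)·I⊗I. -/
import Mathlib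

/-- The sign function `ε_i = 1` for `i ≤ n` and `ε_i = −1` for `i > n`
(`0`-based: `ε_i = 1` iff `i < n`). -/
noncomputable def epsSp (n : ℕ) (i : Fin (2 * n)) : ℂ :=
  if (i : ℕ) < n then 1 else -1

noncomputable def Pm (n : ℕ) :
    Matrix (Fin (2 * n) × Fin (2 * n)) (Fin (2 * n) × Fin (2 * n)) ℂ :=
  Matrix.of fun p q => if p.1 = q.2 ∧ p.2 = q.1 then 1 else 0

noncomputable def fQ (n : ℕ) (p : Fin (2 * n) × Fin (2 * n)) : ℂ :=
  epsSp n p.1 * (if p.2 = p.1.rev then 1 else 0)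

noncomputable def Qm (n : ℕ) :
    Matrix (Fin (2 * n) × Fin (2 * n)) (Fin (2 * n) × Fin (2 * n)) ℂ :=
  Matrix.of fun p q =>
    epsSp n p.1 * epsSp n q.1 * (if p.2 = p.1.rev ∧ q.2 = q.1.rev then 1 else 0)

lemma epsSp_sq (n : ℕ) (i : Fin (2 * n)) : epsSp n i * epsSp n i = 1 := by
  unfold epsSp; split <;> ring

lemma epsSp_rev (n : ℕ) (i : Fin (2 * n)) : epsSp n i.rev = -epsSp n i := by
  have hi := i.isLt
  unfold epsSp
  rw [Fin.val_rev]
  split_ifs with h1 h2 <;> first | (exfalso; omega) | norm_num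

lemma Qm_eq (n : ℕ) : Qm n = Matrix.vecMulVec (fQ n) (fQ n) := by
  ext p q
  simp only [Qm, fQ, Matrix.of_apply, Matrix.vecMulVec_apply, ite_and]
  split_ifs <;> ring

lemma fQ_swap (n : ℕ) (p : Fin (2 * n) × Fin (2 * n)) : fQ n (p.2, p.1) = -fQ n p := by
  unfold fQ
  by_cases h : p.2 = p.1.rev
  · have h' : p.1 = p.2.rev := by rw [h, Fin.rev_rev]
    simp only [if_pos h, if_pos h', mul_one]
    rw [h', epsSp_rev, neg_neg]
  · have h' : ¬ p.1 = p.2.rev := fun hh => h (by rw [hh, Fin.rev_rev])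
    simp [h, h']

lemma fQ_dot (n : ℕ) : ∑ r, fQ n r * fQ n r = ((2 * n : ℕ) : ℂ) := by
  rw [Fintype.sum_prod_type]
  have : ∀ r1 : Fin (2 * n), ∑ r2, fQ n (r1, r2) * fQ n (r1, r2) = 1 := by
    intro r1
    rw [Finset.sum_eq_single r1.rev]
    · simp [fQ, epsSp_sq]
    · intro b _ hb; simp [fQ, hb]
    · simp
  simp [this]

lemma Pm_mul_Pm (n : ℕ) : Pm n * Pm n = 1 := by
  ext ⟨p1, p2⟩ ⟨q1, q2⟩
  simp [Pm, Matrix.mul_apply, Fintype.sum_prod_type, Matrix.one_apply, Prod.ext_iff,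
    ite_and, and_comm]

lemma Pm_mul_Qm (n : ℕ) : Pm n * Qm n = -Qm n := by
  rw [Qm_eq]
  ext p q
  rw [Matrix.mul_apply]
  have : ∀ r, Pm n p r * Matrix.vecMulVec (fQ n) (fQ n) r q
      = (if r = (p.2, p.1) then fQ n (p.2, p.1) * fQ n q else 0) := by
    intro r
    simp only [Pm, Matrix.of_apply, Matrix.vecMulVec_apply]
    by_cases h : r = (p.2, p.1)
    · simp [h]
    · have : ¬ (p.1 = r.2 ∧ p.2 = r.1) := by
        rintro ⟨h1, h2⟩; exact h (Prod.ext h2.symm h1.symm)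
      simp [this, h]
  rw [Finset.sum_congr rfl fun r _ => this r]
  simp only [Finset.sum_ite_eq, Finset.sum_ite_eq', Finset.mem_univ, if_true]
  rw [fQ_swap]
  simp [Matrix.vecMulVec_apply]

lemma Qm_mul_Pm (n : ℕ) : Qm n * Pm n = -Qm n := by
  rw [Qm_eq]
  ext p q
  rw [Matrix.mul_apply]
  have : ∀ r, Matrix.vecMulVec (fQ n) (fQ n) p r * Pm n r q
      = (if r = (q.2, q.1) then fQ n p * fQ n (q.2, q.1) else 0) := by
    intro r
    simp only [Pm, Matrix.of_apply, Matrix.vecMulVec_apply]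
    by_cases h : r = (q.2, q.1)
    · simp [h]
    · have : ¬ (r.1 = q.2 ∧ r.2 = q.1) := by
        rintro ⟨h1, h2⟩; exact h (Prod.ext h1 h2)
      simp [this, h]
  rw [Finset.sum_congr rfl fun r _ => this r]
  simp only [Finset.sum_ite_eq, Finset.sum_ite_eq', Finset.mem_univ, if_true]
  rw [fQ_swap]
  simp [Matrix.vecMulVec_apply]

lemma Qm_mul_Qm (n : ℕ) : Qm n * Qm n = ((2 * n : ℕ) : ℂ) • Qm n := by
  rw [Qm_eq]
  ext p q
  rw [Matrix.mul_apply, Matrix.smul_apply]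
  simp only [Matrix.vecMulVec_apply]
  have key : ∀ r, (fQ n p * fQ n r) * (fQ n r * fQ n q)
      = (fQ n r * fQ n r) * (fQ n p * fQ n q) := fun r => by ring
  rw [Finset.sum_congr rfl fun r _ => key r, ← Finset.sum_mul, fQ_dot, smul_eq_mul]

noncomputable def RmatSp (n : ℕ) (c u v : ℂ) :
    Matrix (Fin (2 * n) × Fin (2 * n)) (Fin (2 * n) × Fin (2 * n)) ℂ :=
  Matrix.of fun p q =>
    (if p = q then 1 else 0)
      + (c / (u - v)) * (if p.1 = q.2 ∧ p.2 = q.1 then 1 else 0)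
      - (c / (u - v + c * ((n : ℂ) + 1))) *
          (epsSp n p.1 * epsSp n q.1 * (if p.2 = p.1.rev ∧ q.2 = q.1.rev then 1 else 0))

lemma RmatSp_eq (n : ℕ) (c u v : ℂ) :
    RmatSp n c u v
      = 1 + (c / (u - v)) • Pm n - (c / (u - v + c * ((n : ℂ) + 1))) • Qm n := by
  ext p q
  simp [RmatSp, Pm, Qm, Matrix.one_apply, Matrix.sub_apply, Matrix.add_apply,
    Matrix.smul_apply, smul_eq_mul]

lemma combo {ι : Type*} [Fintype ι] [DecidableEq ι] (a a' b b' m : ℂ)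
    (P Q : Matrix ι ι ℂ) (hP2 : P * P = 1) (hPQ : P * Q = -Q) (hQP : Q * P = -Q)
    (hQ2 : Q * Q = m • Q) :
    (1 + a • P - b • Q) * (1 + a' • P - b' • Q)
      = (1 + a * a') • (1 : Matrix ι ι ℂ) + (a + a') • P
        + (a * b' + a' * b - b - b' + m * (b * b')) • Q := by
  simp only [sub_mul, mul_sub, add_mul, mul_add, one_mul, mul_one, Matrix.smul_mul,
    Matrix.mul_smul, smul_smul, hP2, hPQ, hQP, hQ2, smul_neg]
  module

lemma coefQ (m c x A A' B B' : ℂ) (hx : x ≠ 0)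
    (hd : x + c * (m + 1) ≠ 0) (he : -x + c * (m + 1) ≠ 0)
    (hA : A * x = c) (hA' : A' * x = -c)
    (hB : B * (x + c * (m + 1)) = c) (hB' : B' * (-x + c * (m + 1)) = c) :
    A * B' + A' * B - B - B' + 2 * m * (B * B') = 0 := by
  set d := x + c * (m + 1) with hdd
  set e := -x + c * (m + 1) with hee
  have h : (A * B' + A' * B - B - B' + 2 * m * (B * B')) * (x * d * e) = 0 := by
    rw [hdd, hee]
    linear_combination (B' * e * d) * hA + (B * d * e) * hA'
      + (-(c * e) - x * e + 2 * m * B' * e * x) * hB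
      + (c * d - x * d + 2 * m * c * x) * hB'
  rcases mul_eq_zero.mp h with h' | h'
  · exact h'
  · exact absurd h' (mul_ne_zero (mul_ne_zero hx hd) he)

/-- The `sp_{2n}`-invariant R-matrix satisfies the unitarity condition
`R(u,v)·R(v,u) = (1 − c²/(u−v)²)·I⊗I`. -/
theorem RmatSp_unitarity (n : ℕ) (hn : 1 ≤ n) (c : ℂ) (hc : c ≠ 0)
    (u v : ℂ) (huv : u - v ≠ 0)
    (huv' : u - v + c * ((n : ℂ) + 1) ≠ 0)
    (hvu' : v - u + c * ((n : ℂ) + 1) ≠ 0) :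
    RmatSp n c u v * RmatSp n c v u =
      (1 - c ^ 2 / (u - v) ^ 2) •
        (1 : Matrix (Fin (2 * n) × Fin (2 * n)) (Fin (2 * n) × Fin (2 * n)) ℂ) := by
  have hvu : v - u ≠ 0 := fun h => huv (by linear_combination -h)
  rw [RmatSp_eq, RmatSp_eq,
    combo _ _ _ _ ((2 * n : ℕ) : ℂ) (Pm n) (Qm n) (Pm_mul_Pm n) (Pm_mul_Qm n)
      (Qm_mul_Pm n) (Qm_mul_Qm n)]
  have h1 : 1 + (c / (u - v)) * (c / (v - u)) = 1 - c ^ 2 / (u - v) ^ 2 := by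
    field_simp
    ring
  have h2 : (c / (u - v)) + (c / (v - u)) = 0 := by
    field_simp
    ring
  have he : -(u - v) + c * ((n : ℂ) + 1) ≠ 0 := by rw [neg_sub]; exact hvu'
  have h3 : (c / (u - v)) * (c / (v - u + c * ((n : ℂ) + 1)))
      + (c / (v - u)) * (c / (u - v + c * ((n : ℂ) + 1)))
      - c / (u - v + c * ((n : ℂ) + 1)) - c / (v - u + c * ((n : ℂ) + 1))
      + ((2 * n : ℕ) : ℂ) * ((c / (u - v + c * ((n : ℂ) + 1)))
          * (c / (v - u + c * ((n : ℂ) + 1)))) = 0 := by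
    rw [show ((2 * n : ℕ) : ℂ) = 2 * (n : ℂ) by push_cast; ring]
    exact coefQ (n : ℂ) c (u - v) _ _ _ _ huv huv' he
      (div_mul_cancel₀ c huv)
      (by rw [show u - v = -(v - u) by ring, mul_neg, div_mul_cancel₀ c hvu])
      (div_mul_cancel₀ c huv')
      (by rw [neg_sub]; exact div_mul_cancel₀ c hvu')
  rw [h1, h2, h3, zero_smul, zero_smul, add_zero, add_zero]
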